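/- For every n ≥ 1, the sum ∑_{m=n}^∞ card(Ĥ²_{m,n}) / 2^{2m−n} equals 1. -/

import Mathlib

open scoped Classical

/-- For a binary string `ε` of length `N`, `D2 ε j` is
`#{i ≤ j : ε_i = 0} − #{i ≤ j : ε_i = 1}` over the first `j` entries. -/
def D2 {N : ℕ} (ε : Fin N → Fin 2) (j : ℕ) : ℤ :=
  ((Finset.univ.filter fun i : Fin N => (i : ℕ) < j ∧ ε i = 0).card : ℤ) -
    ((Finset.univ.filter fun i : Fin N => (i : ℕ) < j ∧ ε i = 1).card : ℤ)

/-- `ε` encodes a leading hump of order `m`: `D_j ≥ 0` for all `j ≤ 2m`,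
`D_{2m} = 0`, and `ε_j = 1` whenever `D_j = 0`. -/
def IsLeadingHump (m : ℕ) (ε : Fin (2 * m) → Fin 2) : Prop :=
  (∀ j, 1 ≤ j → j ≤ 2 * m → 0 ≤ D2 ε j) ∧ D2 ε (2 * m) = 0 ∧
    ∀ j (hj : 1 ≤ j) (hj' : j ≤ 2 * m), D2 ε j = 0 → ε ⟨j - 1, by omega⟩ = 1

/-- `Ĥ²_{m,n}`: the set of binary strings of length `2m` encoding leading
humps of order `m` and generation `n`. -/
noncomputable def H2 (m n : ℕ) : Finset (Fin (2 * m) → Fin 2) :=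
  Finset.univ.filter fun ε => IsLeadingHump m ε ∧
    ((Finset.Icc 1 (2 * m)).filter fun j => D2 ε j = 0).card = n

namespace HumpAux

open Filter

def dd (l : List (Fin 2)) : ℤ := (l.count 0 : ℤ) - (l.count 1 : ℤ)

@[simp] lemma dd_nil : dd [] = 0 := by simp [dd]

lemma dd_append (a b : List (Fin 2)) : dd (a ++ b) = dd a + dd b := by
  simp [dd, List.count_append]; ring

lemma dd_singleton (x : Fin 2) : dd [x] = if x = 0 then 1 else -1 := by
  fin_cases x <;> simp [dd, List.count_singleton']

lemma count_eq_sum_map (c : Fin 2) (l : List (Fin 2)) :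
    l.count c = (l.map fun x => if x = c then (1:ℕ) else 0).sum := by
  induction l with
  | nil => simp
  | cons x l ih =>
      rw [List.count_cons, List.map_cons, List.sum_cons, ih]
      by_cases h : x = c <;> simp [h] <;> omega

lemma count_take_ofFn {N : ℕ} (ε : Fin N → Fin 2) (j : ℕ) (c : Fin 2) :
    ((List.ofFn ε).take j).count c
      = (Finset.univ.filter fun i : Fin N => (i : ℕ) < j ∧ ε i = c).card := by
  rw [count_eq_sum_map, List.map_take, List.map_ofFn, List.sum_take_ofFn,
    Finset.card_filter]
  rw [Finset.sum_filter]
  apply Finset.sum_congr rfl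
  intro i _
  by_cases h1 : (i : ℕ) < j <;> by_cases h2 : ε i = c <;> simp [h1, h2]

lemma D2_eq {N : ℕ} (ε : Fin N → Fin 2) (j : ℕ) :
    D2 ε j = dd ((List.ofFn ε).take j) := by
  rw [D2, dd, count_take_ofFn, count_take_ofFn]

/-- parity: `dd l + l.length` is even. -/
lemma dd_parity (l : List (Fin 2)) : (2:ℤ) ∣ (dd l + l.length) := by
  induction l with
  | nil => simp
  | cons x l ih =>
      have : dd (x :: l) = dd [x] + dd l := dd_append [x] l
      rw [this]
      rcases ih with ⟨t, ht⟩
      fin_cases x <;> simp [dd_singleton] at * <;>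
        [exact ⟨t + 1, by push_cast; linarith⟩; exact ⟨t, by push_cast; linarith⟩]

/-- prefix sums nonneg -/
def NN (l : List (Fin 2)) : Prop := ∀ j, 0 ≤ dd (l.take j)

def IsDyckL (l : List (Fin 2)) : Prop := NN l ∧ dd l = 0

def Ones (l : List (Fin 2)) : Prop :=
  ∀ j (h : j < l.length), dd (l.take (j+1)) = 0 → l.get ⟨j, h⟩ = 1

def IsHumpL (l : List (Fin 2)) : Prop := IsDyckL l ∧ Ones l

noncomputable def genL (l : List (Fin 2)) : ℕ :=
  ((Finset.Icc 1 l.length).filter fun j => dd (l.take j) = 0).card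

noncomputable def listsOfLen (L : ℕ) : Finset (List (Fin 2)) :=
  (Finset.univ : Finset (Fin L → Fin 2)).image List.ofFn

lemma mem_listsOfLen {L : ℕ} {l : List (Fin 2)} :
    l ∈ listsOfLen L ↔ l.length = L := by
  constructor
  · rintro h
    simp only [listsOfLen, Finset.mem_image] at h
    obtain ⟨ε, -, rfl⟩ := h
    simp
  · rintro rfl
    simp only [listsOfLen, Finset.mem_image]
    exact ⟨fun i => l.get i, Finset.mem_univ _, (List.ofFn_get l)⟩

noncomputable def humpSet (m n : ℕ) : Finset (List (Fin 2)) :=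
  (listsOfLen (2 * m)).filter fun l => IsHumpL l ∧ genL l = n

lemma isLeadingHump_iff (m : ℕ) (ε : Fin (2 * m) → Fin 2) :
    IsLeadingHump m ε ↔ IsHumpL (List.ofFn ε) := by
  have hlen : (List.ofFn ε).length = 2 * m := List.length_ofFn
  constructor
  · rintro ⟨h1, h2, h3⟩
    refine ⟨⟨fun j => ?_, ?_⟩, fun j h hd => ?_⟩
    · rcases Nat.eq_zero_or_pos j with rfl | hj
      · simp
      rcases le_or_gt j (2 * m) with hj' | hj'
      · rw [← D2_eq]; exact h1 j hj hj'
      · rw [List.take_of_length_le (by omega)]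
        rw [← List.take_length (l := List.ofFn ε), hlen, ← D2_eq, h2]
    · rw [← List.take_length (l := List.ofFn ε), hlen, ← D2_eq]; exact h2
    · rw [← D2_eq] at hd
      have := h3 (j+1) (by omega) (by omega) hd
      simpa using this
  · rintro ⟨⟨h1, h2⟩, h3⟩
    refine ⟨fun j _ _ => by rw [D2_eq]; exact h1 j, ?_, fun j hj hj' hd => ?_⟩
    · rw [D2_eq, List.take_of_length_le (le_of_eq hlen)]; exact h2
    · rw [D2_eq] at hd
      have hjl : j - 1 < (List.ofFn ε).length := by omega
      have := h3 (j-1) hjl (by rwa [Nat.sub_add_cancel hj])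
      simpa using this

lemma gen_eq (m : ℕ) (ε : Fin (2 * m) → Fin 2) :
    ((Finset.Icc 1 (2 * m)).filter fun j => D2 ε j = 0).card = genL (List.ofFn ε) := by
  unfold genL
  rw [List.length_ofFn]
  congr 1
  apply Finset.filter_congr
  intro j _
  rw [D2_eq]

lemma card_H2_eq (m n : ℕ) : (H2 m n).card = (humpSet m n).card := by
  have : humpSet m n = (H2 m n).image List.ofFn := by
    ext l
    simp only [humpSet, Finset.mem_filter, Finset.mem_image, H2]
    constructor
    · rintro ⟨hl, hh, hg⟩
      rw [mem_listsOfLen] at hl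
      refine ⟨fun i => l.get (Fin.cast hl.symm i), ?_, ?_⟩
      · have hofn : List.ofFn (fun i => l.get (Fin.cast hl.symm i)) = l := by
          apply List.ext_get (by simp [hl])
          intro i h1 h2; simp
        refine ⟨Finset.mem_univ _, ?_, ?_⟩
        · rw [isLeadingHump_iff, hofn]; exact hh
        · rw [gen_eq, hofn]; exact hg
      · apply List.ext_get (by simp [hl])
        intro i h1 h2; simp
    · rintro ⟨ε, hε, rfl⟩
      obtain ⟨-, hh, hg⟩ := hε
      exact ⟨mem_listsOfLen.mpr (by simp), (isLeadingHump_iff m ε).mp hh,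
        by rw [← gen_eq]; exact hg⟩
  rw [this, Finset.card_image_of_injective _ (List.ofFn_injective)]

lemma take_append_add (a b : List (Fin 2)) (j : ℕ) :
    (a ++ b).take (a.length + j) = a ++ b.take j := by
  rw [List.take_append]; simp

lemma hump_append {a b : List (Fin 2)} (ha : IsHumpL a) (hb : IsHumpL b) :
    IsHumpL (a ++ b) := by
  obtain ⟨⟨ha1, ha2⟩, ha3⟩ := ha
  obtain ⟨⟨hb1, hb2⟩, hb3⟩ := hb
  refine ⟨⟨fun j => ?_, ?_⟩, fun j h hd => ?_⟩
  · rcases le_or_gt j a.length with h | h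
    · rw [List.take_append_of_le_length h]; exact ha1 j
    · have hj : j = a.length + (j - a.length) := by omega
      rw [hj, take_append_add, dd_append, ha2]
      simpa using hb1 _
  · rw [dd_append, ha2, hb2]; ring
  · rw [List.length_append] at h
    rcases lt_or_ge j a.length with hj | hj
    · have hd' : dd (a.take (j+1)) = 0 := by
        rw [← List.take_append_of_le_length (by omega : j + 1 ≤ a.length)]; exact hd
      have := ha3 j hj hd'
      simp only [List.get_eq_getElem] at this ⊢
      rwa [List.getElem_append_left hj]
    · have hj1 : j + 1 = a.length + (j - a.length + 1) := by omega
      have hd' : dd (b.take (j - a.length + 1)) = 0 := by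
        rw [hj1, take_append_add, dd_append, ha2] at hd; linarith
      have hb' : j - a.length < b.length := by omega
      have := hb3 _ hb' hd'
      simp only [List.get_eq_getElem] at this ⊢
      rwa [List.getElem_append_right hj]

lemma genL_append {a : List (Fin 2)} (ha : dd a = 0) (b : List (Fin 2)) :
    genL (a ++ b) = genL a + genL b := by
  unfold genL
  rw [List.length_append]
  have hsplit : Finset.Icc 1 (a.length + b.length)
      = Finset.Icc 1 a.length ∪ Finset.Icc (a.length + 1) (a.length + b.length) := by
    ext j; simp only [Finset.mem_Icc, Finset.mem_union]; omega
  rw [hsplit, Finset.filter_union, Finset.card_union_of_disjoint]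
  · congr 1
    · congr 1
      apply Finset.filter_congr
      intro j hj
      rw [Finset.mem_Icc] at hj
      rw [List.take_append_of_le_length hj.2]
    · have h2 : Finset.Icc (a.length + 1) (a.length + b.length)
          = Finset.map (addLeftEmbedding a.length) (Finset.Icc 1 b.length) :=
        (Finset.map_add_left_Icc _ _ _).symm
      rw [h2, Finset.filter_map, Finset.card_map]
      congr 1
      apply Finset.filter_congr
      intro j hj
      simp only [Function.comp_apply, addLeftEmbedding_apply]
      rw [take_append_add, dd_append, ha, zero_add]
  · apply Finset.disjoint_filter_filter
    rw [Finset.disjoint_left]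
    intro j hj hj'
    rw [Finset.mem_Icc] at hj hj'
    omega

lemma exists_split {l : List (Fin 2)} (hl : IsHumpL l) (hg : 1 ≤ genL l) :
    ∃ k a b, l = a ++ b ∧ a.length = 2 * k ∧ 1 ≤ k ∧ IsHumpL a ∧ genL a = 1 ∧ IsHumpL b := by
  obtain ⟨⟨hl1, hl2⟩, hl3⟩ := hl
  unfold genL at hg
  set Z := (Finset.Icc 1 l.length).filter (fun j => dd (l.take j) = 0) with hZ
  have hZne : Z.Nonempty := Finset.card_pos.mp (by omega)
  set j0 := Z.min' hZne with hj0
  have hj0mem : j0 ∈ Z := Z.min'_mem hZne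
  rw [hZ, Finset.mem_filter, Finset.mem_Icc] at hj0mem
  obtain ⟨⟨hj01, hj0len⟩, hj0z⟩ := hj0mem
  have hmin : ∀ j, j ∈ Z → j0 ≤ j := fun j hj => Z.min'_le j hj
  have hpar : (2:ℤ) ∣ (j0 : ℤ) := by
    have h := dd_parity (l.take j0)
    rw [hj0z, List.length_take, min_eq_left hj0len] at h
    simpa using h
  have hpar' : 2 ∣ j0 := by
    rcases hpar with ⟨t, ht⟩
    refine ⟨t.toNat, ?_⟩
    omega
  obtain ⟨k, hk⟩ := hpar'
  have hlen_a : (l.take j0).length = j0 := by rw [List.length_take]; omega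
  have hddl : dd (l.take j0) + dd (l.drop j0) = dd l := by
    rw [← dd_append, List.take_append_drop]
  refine ⟨k, l.take j0, l.drop j0, (List.take_append_drop j0 l).symm,
    by omega, by omega, ⟨⟨?_, hj0z⟩, ?_⟩, ?_, ⟨⟨?_, by omega⟩, ?_⟩⟩
  · -- NN of take
    intro j
    rw [List.take_take]
    exact hl1 _
  · -- Ones of take
    intro j hj hd
    rw [hlen_a] at hj
    rw [List.take_take, min_eq_left (by omega)] at hd
    have := hl3 j (by omega) hd
    simp only [List.get_eq_getElem] at this ⊢
    rwa [List.getElem_take]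
  · -- genL of take = 1
    unfold genL
    rw [hlen_a]
    have heq : (Finset.Icc 1 j0).filter (fun j => dd ((l.take j0).take j) = 0) = {j0} := by
      ext j
      simp only [Finset.mem_filter, Finset.mem_Icc, Finset.mem_singleton]
      constructor
      · rintro ⟨⟨h1, h2⟩, h3⟩
        rw [List.take_take, min_eq_left h2] at h3
        have hjZ : j ∈ Z := by
          rw [hZ, Finset.mem_filter, Finset.mem_Icc]
          exact ⟨⟨h1, le_trans h2 hj0len⟩, h3⟩
        have := hmin j hjZ
        omega
      · rintro rfl
        refine ⟨⟨hj01, le_refl _⟩, ?_⟩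
        rw [List.take_take, min_self]
        exact hj0z
    rw [heq, Finset.card_singleton]
  · -- NN of drop
    intro j
    have h := hl1 (j0 + j)
    rwa [List.take_add, dd_append, hj0z, zero_add] at h
  · -- Ones of drop
    intro j hj hd
    have hlt : j0 + j < l.length := by
      rw [List.length_drop] at hj; omega
    have htk : dd (l.take (j0 + j + 1)) = 0 := by
      have he : j0 + j + 1 = j0 + (j+1) := by omega
      rw [he, List.take_add, dd_append, hj0z, zero_add]
      exact hd
    have h2 := hl3 (j0 + j) hlt htk
    simp only [List.get_eq_getElem] at h2 ⊢
    rw [List.getElem_drop]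
    exact h2


lemma mem_humpSet {m n : ℕ} {l : List (Fin 2)} :
    l ∈ humpSet m n ↔ l.length = 2 * m ∧ IsHumpL l ∧ genL l = n := by
  rw [humpSet, Finset.mem_filter, mem_listsOfLen]

lemma humpSet_succ (m n : ℕ) :
    humpSet m (n + 1) = (Finset.Icc 1 m).biUnion
      (fun k => ((humpSet k 1) ×ˢ (humpSet (m - k) n)).image fun p => p.1 ++ p.2) := by
  ext l
  simp only [Finset.mem_biUnion, Finset.mem_image, Finset.mem_product, Prod.exists,
    Finset.mem_Icc]
  constructor
  · intro hl
    rw [mem_humpSet] at hl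
    obtain ⟨hlen, hh, hgen⟩ := hl
    obtain ⟨k, a, b, hlab, halen, hk1, hha, hga, hhb⟩ := exists_split hh (by omega)
    subst hlab
    have hgab := genL_append hha.1.2 b
    have hablen : a.length + b.length = 2 * m := by rw [← List.length_append]; exact hlen
    have hkm : k ≤ m := by omega
    refine ⟨k, ⟨hk1, hkm⟩, a, b, ⟨?_, ?_⟩, rfl⟩
    · rw [mem_humpSet]; exact ⟨halen, hha, hga⟩
    · rw [mem_humpSet]
      exact ⟨by omega, hhb, by omega⟩
  · rintro ⟨k, ⟨hk1, hkm⟩, a, b, ⟨ha, hb⟩, rfl⟩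
    rw [mem_humpSet] at ha hb ⊢
    obtain ⟨halen, hha, hga⟩ := ha
    obtain ⟨hblen, hhb, hgb⟩ := hb
    refine ⟨by rw [List.length_append]; omega, hump_append hha hhb, ?_⟩
    rw [genL_append hha.1.2, hga, hgb]
    omega

lemma prefix_clash {a b a' b' : List (Fin 2)} (h : a ++ b = a' ++ b')
    (hda : dd a = 0) (hda' : dd a' = 0) (hga1 : genL a' = 1) (h1 : 1 ≤ a.length)
    (hlt : a.length < a'.length) : False := by
  have hpre : a'.take a.length = a := by
    have h2 : (a ++ b).take a.length = a := by
      rw [List.take_append_of_le_length (le_refl _), List.take_length]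
    rw [h] at h2
    rwa [List.take_append_of_le_length (le_of_lt hlt)] at h2
  have hsub : ({a.length, a'.length} : Finset ℕ)
      ⊆ (Finset.Icc 1 a'.length).filter (fun j => dd (a'.take j) = 0) := by
    intro j hj
    rw [Finset.mem_insert, Finset.mem_singleton] at hj
    rw [Finset.mem_filter, Finset.mem_Icc]
    rcases hj with rfl | rfl
    · exact ⟨⟨h1, le_of_lt hlt⟩, by rw [hpre]; exact hda⟩
    · exact ⟨⟨by omega, le_refl _⟩, by rw [List.take_length]; exact hda'⟩
  have hcard := Finset.card_le_card hsub
  rw [Finset.card_pair (by omega)] at hcard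
  unfold genL at hga1
  omega

lemma card_humpSet_succ (m n : ℕ) :
    (humpSet m (n+1)).card
      = ∑ k ∈ Finset.Icc 1 m, (humpSet k 1).card * (humpSet (m-k) n).card := by
  rw [humpSet_succ, Finset.card_biUnion]
  · apply Finset.sum_congr rfl
    intro k _
    rw [← Finset.card_product]
    apply Finset.card_image_of_injOn
    rintro ⟨a, b⟩ hab ⟨a', b'⟩ hab' heq
    simp only [Finset.mem_coe, Finset.mem_product, mem_humpSet] at hab hab'
    have hlen : a.length = a'.length := by rw [hab.1.1, hab'.1.1]
    obtain ⟨h1, h2⟩ := List.append_inj heq hlen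
    simp only [Prod.mk.injEq]
    exact ⟨h1, h2⟩
  · intro k hk k' hk' hne
    simp only [Finset.mem_coe, Finset.mem_Icc] at hk hk'
    rw [Function.onFun, Finset.disjoint_left]
    rintro l hl hl'
    simp only [Finset.mem_image, Finset.mem_product, Prod.exists] at hl hl'
    obtain ⟨a, b, ⟨ha, hb⟩, hlab⟩ := hl
    obtain ⟨a', b', ⟨ha', hb'⟩, hlab'⟩ := hl'
    rw [mem_humpSet] at ha ha' hb hb'
    have heq : a ++ b = a' ++ b' := by rw [hlab, hlab']
    rcases Nat.lt_or_ge (a.length) (a'.length) with hlt | hge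
    · exact prefix_clash heq ha.2.1.1.2 ha'.2.1.1.2 ha'.2.2 (by omega) hlt
    · have hlt' : a'.length < a.length := by
        rw [ha.1, ha'.1]; rw [ha.1, ha'.1] at hge; omega
      exact prefix_clash heq.symm ha'.2.1.1.2 ha.2.1.1.2 ha.2.2 (by omega) hlt'

lemma humpSet_zero (n : ℕ) (hn : 1 ≤ n) : humpSet 0 n = ∅ := by
  ext l
  simp only [Finset.notMem_empty, iff_false, mem_humpSet]
  rintro ⟨hlen, -, hgen⟩
  rw [List.length_eq_zero_iff] at hlen
  subst hlen
  unfold genL at hgen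
  simp at hgen
  omega

lemma dd_cons (x : Fin 2) (l : List (Fin 2)) : dd (x :: l) = dd [x] + dd l :=
  dd_append [x] l

@[simp] lemma dd_sing_zero : dd [(0:Fin 2)] = 1 := by rw [dd_singleton]; simp

@[simp] lemma dd_sing_one : dd [(1:Fin 2)] = -1 := by
  rw [dd_singleton]; norm_num

lemma dd_take_hump {w : List (Fin 2)} {j : ℕ} (hj : j ≤ w.length) (y : Fin 2) :
    dd (((0:Fin 2) :: (w ++ [y])).take (j+1)) = 1 + dd (w.take j) := by
  rw [List.take_succ_cons, dd_cons, List.take_append_of_le_length hj, dd_sing_zero]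

lemma dd_hump (w : List (Fin 2)) : dd ((0:Fin 2) :: (w ++ [1])) = dd w := by
  rw [dd_cons, dd_append, dd_sing_zero, dd_sing_one]; ring

noncomputable def dyckSet (d : ℕ) : Finset (List (Fin 2)) :=
  (listsOfLen (2 * d)).filter IsDyckL

lemma mem_dyckSet {d : ℕ} {w : List (Fin 2)} :
    w ∈ dyckSet d ↔ w.length = 2 * d ∧ IsDyckL w := by
  rw [dyckSet, Finset.mem_filter, mem_listsOfLen]

lemma humpSet_one {m : ℕ} (hm : 1 ≤ m) :
    humpSet m 1 = (dyckSet (m-1)).image (fun w => (0:Fin 2) :: (w ++ [1])) := by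
  ext l
  rw [mem_humpSet, Finset.mem_image]
  constructor
  · rintro ⟨hlen, ⟨⟨h1, h2⟩, h3⟩, hgen⟩
    have hz : ∀ j, 1 ≤ j → j < 2*m → dd (l.take j) ≠ 0 := by
      intro j hj1 hj2 hj0
      have hsub : ({j, 2*m} : Finset ℕ)
          ⊆ (Finset.Icc 1 l.length).filter (fun i => dd (l.take i) = 0) := by
        intro i hi
        rw [Finset.mem_insert, Finset.mem_singleton] at hi
        rw [Finset.mem_filter, Finset.mem_Icc]
        rcases hi with rfl | rfl
        · exact ⟨⟨hj1, by omega⟩, hj0⟩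
        · refine ⟨⟨by omega, by omega⟩, ?_⟩
          rw [← hlen, List.take_length]; exact h2
      have hcard := Finset.card_le_card hsub
      rw [Finset.card_pair (by omega)] at hcard
      unfold genL at hgen
      omega
    obtain ⟨x, t, rfl⟩ : ∃ x t, l = x :: t := by
      cases l with
      | nil => simp at hlen; omega
      | cons x t => exact ⟨x, t, rfl⟩
    have htne : t ≠ [] := by
      intro h
      rw [h] at hlen
      simp only [List.length_cons, List.length_nil] at hlen
      omega
    obtain ⟨w, y, rfl⟩ : ∃ w y, t = w ++ [y] :=
      ⟨t.dropLast, t.getLast htne, (List.dropLast_append_getLast htne).symm⟩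
    have hlw : w.length = 2*(m-1) := by
      simp only [List.length_cons, List.length_append, List.length_singleton, List.length_nil] at hlen
      omega
    have hx : x = 0 := by
      have h10 := h1 1
      rw [List.take_succ_cons, List.take_zero] at h10
      rcases (by decide : ∀ z : Fin 2, z = 0 ∨ z = 1) x with hz0 | hz1
      · exact hz0
      · rw [hz1, dd_sing_one] at h10; omega
    subst hx
    have hcons : (0:Fin 2) :: (w ++ [y]) = ((0:Fin 2) :: w) ++ [y] := by simp
    have hy : y = 1 := by
      have hfull : dd (((0:Fin 2) :: (w ++ [y])).take (2*m - 1 + 1)) = 0 := by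
        rw [show 2*m-1+1 = 2*m by omega, ← hlen, List.take_length]; exact h2
      have hlt : 2*m - 1 < ((0:Fin 2) :: (w ++ [y])).length := by
        rw [hlen]; omega
      have hg := h3 (2*m-1) hlt hfull
      simp only [List.get_eq_getElem] at hg
      have hidx : 2*m - 1 = ((0:Fin 2) :: w).length := by
        simp only [List.length_cons]; omega
      rw [List.getElem_of_eq hcons, List.getElem_concat_length hidx] at hg
      exact hg
    subst hy
    refine ⟨w, mem_dyckSet.mpr ⟨hlw, ⟨?_, ?_⟩⟩, rfl⟩
    · intro j
      rcases le_or_gt j w.length with hj | hj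
      · have hd := dd_take_hump hj (1:Fin 2)
        have hge := h1 (j+1)
        have hne := hz (j+1) (by omega) (by omega)
        rw [hd] at hge hne
        omega
      · rw [List.take_of_length_le (by omega)]
        have hd := dd_hump w
        rw [← hd]
        exact le_of_eq h2.symm
    · have := dd_hump w
      rw [← this]
      exact h2
  · rintro ⟨w, hw, rfl⟩
    rw [mem_dyckSet] at hw
    obtain ⟨hwl, hw1, hw2⟩ := hw
    have hlen : ((0:Fin 2) :: (w ++ [1])).length = 2*m := by
      simp only [List.length_cons, List.length_append, List.length_singleton, List.length_nil]
      omega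
    have hddl : dd ((0:Fin 2) :: (w ++ [1])) = 0 := by rw [dd_hump]; exact hw2
    have hpos : ∀ j, 1 ≤ j → j ≤ w.length + 1 → 1 ≤ dd (((0:Fin 2) :: (w ++ [1])).take j) := by
      intro j hj1 hj2
      have he : j = (j-1) + 1 := by omega
      rw [he, dd_take_hump (by omega) (1:Fin 2)]
      have := hw1 (j-1)
      omega
    have hNN : NN ((0:Fin 2) :: (w ++ [1])) := by
      intro j
      rcases Nat.eq_zero_or_pos j with rfl | hj1
      · simp [dd_nil]
      rcases le_or_gt j (w.length + 1) with hj | hj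
      · have := hpos j hj1 hj
        omega
      · rw [List.take_of_length_le (by rw [hlen]; omega)]
        rw [hddl]
    refine ⟨hlen, ⟨⟨hNN, hddl⟩, ?_⟩, ?_⟩
    · intro j hj hd
      rcases le_or_gt (j+1) (w.length + 1) with hj' | hj'
      · have := hpos (j+1) (by omega) hj'
        omega
      · have hje : j = w.length + 1 := by
          rw [hlen] at hj; omega
        have hcons : (0:Fin 2) :: (w ++ [1]) = ((0:Fin 2) :: w) ++ [(1:Fin 2)] := by simp
        have hidx : j = ((0:Fin 2) :: w).length := by
          simp only [List.length_cons]; omega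
        simp only [List.get_eq_getElem]
        rw [List.getElem_of_eq hcons, List.getElem_concat_length hidx]
    · unfold genL
      rw [hlen]
      have heq : (Finset.Icc 1 (2*m)).filter
          (fun j => dd (((0:Fin 2) :: (w ++ [1])).take j) = 0) = {2*m} := by
        ext j
        simp only [Finset.mem_filter, Finset.mem_Icc, Finset.mem_singleton]
        constructor
        · rintro ⟨⟨hj1, hj2⟩, hj0⟩
          by_contra hne
          have hjlt : j ≤ w.length + 1 := by omega
          have := hpos j hj1 hjlt
          omega
        · rintro rfl
          refine ⟨⟨by omega, le_refl _⟩, ?_⟩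
          rw [← hlen, List.take_length]
          exact hddl
      rw [heq, Finset.card_singleton]

lemma card_humpSet_one {m : ℕ} (hm : 1 ≤ m) :
    (humpSet m 1).card = (dyckSet (m-1)).card := by
  rw [humpSet_one hm]
  apply Finset.card_image_of_injective
  intro w w' h
  simp only [List.cons.injEq] at h
  exact List.append_cancel_right h.2

lemma count01 (l : List (Fin 2)) : l.count 0 + l.count 1 = l.length := by
  induction l with
  | nil => simp
  | cons x t ih =>
      rw [List.length_cons, List.count_cons, List.count_cons, ← ih]
      rcases (by decide : ∀ z : Fin 2, z = 0 ∨ z = 1) x with rfl | rfl <;> simp <;> omega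

open DyckStep in
def toStep : Fin 2 → DyckStep := fun x => if x = 0 then U else D

def ofStep : DyckStep → Fin 2 := fun s => match s with
  | DyckStep.U => 0
  | DyckStep.D => 1

lemma toStep_inj : Function.Injective toStep := by decide

lemma ofStep_inj : Function.Injective ofStep := by
  intro a b h
  cases a <;> cases b <;> simp_all [ofStep]

lemma toStep_ofStep (s : DyckStep) : toStep (ofStep s) = s := by cases s <;> rfl

lemma ofStep_toStep (x : Fin 2) : ofStep (toStep x) = x := by revert x; decide

lemma count_U_map (l : List (Fin 2)) : (l.map toStep).count DyckStep.U = l.count 0 := by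
  rw [show DyckStep.U = toStep 0 from rfl]
  exact List.count_map_of_injective _ _ toStep_inj _

lemma count_D_map (l : List (Fin 2)) : (l.map toStep).count DyckStep.D = l.count 1 := by
  rw [show DyckStep.D = toStep 1 from rfl]
  exact List.count_map_of_injective _ _ toStep_inj _

lemma count_zero_map (L : List DyckStep) : (L.map ofStep).count 0 = L.count DyckStep.U := by
  rw [show (0 : Fin 2) = ofStep DyckStep.U from rfl]
  exact List.count_map_of_injective _ _ ofStep_inj _

lemma count_one_map (L : List DyckStep) : (L.map ofStep).count 1 = L.count DyckStep.D := by
  rw [show (1 : Fin 2) = ofStep DyckStep.D from rfl]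
  exact List.count_map_of_injective _ _ ofStep_inj _

noncomputable def dyckEquiv (d : ℕ) :
    {w : List (Fin 2) // w ∈ dyckSet d} ≃ {p : DyckWord // p.semilength = d} where
  toFun w := by
    obtain ⟨hlen, hnn, hdd⟩ : w.1.length = 2 * d ∧ NN w.1 ∧ dd w.1 = 0 := by
      have := mem_dyckSet.mp w.2
      exact ⟨this.1, this.2.1, this.2.2⟩
    refine ⟨⟨w.1.map toStep, ?_, ?_⟩, ?_⟩
    · rw [count_U_map, count_D_map]
      unfold dd at hdd; omega
    · intro i
      rw [← List.map_take, count_U_map, count_D_map]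
      have := hnn i
      unfold dd at this; omega
    · show (w.1.map toStep).count DyckStep.U = d
      rw [count_U_map]
      have h1 := count01 w.1
      unfold dd at hdd
      omega
  invFun p := by
    refine ⟨(p.1 : List DyckStep).map ofStep, mem_dyckSet.mpr ⟨?_, ?_, ?_⟩⟩
    · rw [List.length_map, ← p.1.two_mul_semilength_eq_length, p.2]
    · intro j
      rw [← List.map_take]
      have h := p.1.count_D_le_count_U j
      unfold dd
      rw [count_zero_map, count_one_map]
      omega
    · have h := p.1.count_U_eq_count_D
      unfold dd
      rw [count_zero_map, count_one_map]
      omega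
  left_inv w := by
    apply Subtype.ext
    simp only [List.map_map]
    have : ofStep ∘ toStep = id := funext ofStep_toStep
    rw [this, List.map_id]
  right_inv p := by
    apply Subtype.ext
    apply DyckWord.ext
    simp only [List.map_map]
    have : toStep ∘ ofStep = id := funext toStep_ofStep
    show List.map (toStep ∘ ofStep) _ = _
    rw [this, List.map_id]

lemma card_dyckSet (d : ℕ) : (dyckSet d).card = catalan d := by
  rw [← Fintype.card_coe, Fintype.card_congr (dyckEquiv d)]
  exact DyckWord.card_dyckWord_semilength_eq_catalan d


noncomputable def c (m n : ℕ) : ℕ := (humpSet m n).card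

lemma c_one (m : ℕ) (hm : 1 ≤ m) : c m 1 = catalan (m-1) := by
  unfold c
  rw [card_humpSet_one hm, card_dyckSet]

lemma c_zero_n (n : ℕ) (hn : 1 ≤ n) : c 0 n = 0 := by
  unfold c
  rw [humpSet_zero n hn, Finset.card_empty]

lemma c_rec (m n : ℕ) : c (m) (n+1) = ∑ k ∈ Finset.Icc 1 m, c k 1 * c (m-k) n := by
  unfold c
  exact card_humpSet_succ m n

noncomputable def bR (M : ℕ) : ℝ := (Nat.centralBinom M : ℝ) / 4^M

lemma bR_nonneg (M : ℕ) : 0 ≤ bR M := by unfold bR; positivity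

lemma bR_zero : bR 0 = 1 := by simp [bR, Nat.centralBinom_zero]

lemma bR_succ (M : ℕ) : bR (M+1) = bR M * (2*M+1) / (2*M+2) := by
  unfold bR
  have h := Nat.succ_mul_centralBinom_succ M
  have h' : ((M:ℝ)+1) * (Nat.centralBinom (M+1)) = 2*(2*(M:ℝ)+1) * Nat.centralBinom M := by
    exact_mod_cast h
  have h4 : (0:ℝ) < 4 ^ M := by positivity
  rw [pow_succ]
  field_simp
  nlinarith [h', h4]

lemma catalan_term (M : ℕ) : (catalan M : ℝ)/4^M = 2*bR M - 2*bR (M+1) := by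
  rw [bR_succ]
  unfold bR
  have hcat : ((M:ℝ)+1) * catalan M = Nat.centralBinom M := by
    exact_mod_cast succ_mul_catalan_eq_centralBinom M
  have h4 : (0:ℝ) < 4 ^ M := by positivity
  field_simp
  linear_combination hcat

lemma partial_sum (M : ℕ) :
    ∑ j ∈ Finset.range M, (catalan j : ℝ)/4^j = 2 - 2*bR M := by
  induction M with
  | zero => simp [bR_zero]
  | succ M ih => rw [Finset.sum_range_succ, ih, catalan_term]; ring

lemma bR_sq (M : ℕ) : bR M^2 * (M+1) ≤ 1 := by
  induction M with
  | zero => rw [bR_zero]; norm_num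
  | succ M ih =>
      rw [bR_succ]
      have key : ((2*(M:ℝ)+1))^2 * ((M:ℝ)+2) ≤ (2*(M:ℝ)+2)^2 * ((M:ℝ)+1) := by nlinarith
      have h1 : (0:ℝ) < (2*(M:ℝ)+2)^2 := by positivity
      rw [div_pow, div_mul_eq_mul_div, div_le_one h1]
      push_cast
      nlinarith [mul_le_mul_of_nonneg_left key (sq_nonneg (bR M)),
        mul_le_mul_of_nonneg_right ih (le_of_lt h1), sq_nonneg (bR M)]

lemma bR_tendsto : Tendsto bR atTop (nhds 0) := by
  have hle : ∀ M : ℕ, bR M ≤ Real.sqrt (1/((M:ℝ)+1)) := by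
    intro M
    have h1 : bR M ^ 2 ≤ 1/((M:ℝ)+1) := by
      have h2 : (0:ℝ) < (M:ℝ)+1 := by positivity
      rw [le_div_iff₀ h2]
      exact bR_sq M
    calc bR M = Real.sqrt (bR M ^ 2) := by rw [Real.sqrt_sq (bR_nonneg M)]
    _ ≤ Real.sqrt (1/((M:ℝ)+1)) := Real.sqrt_le_sqrt h1
  have htend : Tendsto (fun M : ℕ => Real.sqrt (1/((M:ℝ)+1))) atTop (nhds 0) := by
    have h0 : Tendsto (fun M : ℕ => 1/((M:ℝ)+1)) atTop (nhds 0) :=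
      tendsto_one_div_add_atTop_nhds_zero_nat
    have h1 := (Real.continuous_sqrt.tendsto 0).comp h0
    rw [Real.sqrt_zero] at h1
    exact h1
  exact squeeze_zero bR_nonneg hle htend

lemma hasSum_catalan : HasSum (fun j => (catalan j : ℝ)/4^j) 2 := by
  rw [hasSum_iff_tendsto_nat_of_nonneg (fun i => by positivity)]
  have he : (fun M => ∑ j ∈ Finset.range M, (catalan j : ℝ)/4^j)
      = fun M => 2 - 2*bR M := funext partial_sum
  rw [he]
  have h := tendsto_const_nhds (x := (2:ℝ)) (f := atTop (α := ℕ))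
  have := h.sub (bR_tendsto.const_mul 2)
  simpa using this

noncomputable def g (n : ℕ) : ℕ → ℝ := fun m => (c m n : ℝ) * 2^n / 4^m

lemma g_nonneg (n m : ℕ) : 0 ≤ g n m := by unfold g; positivity

lemma hasSum_g1 : HasSum (g 1) 1 := by
  have h0 : g 1 0 = 0 := by simp [g, c_zero_n 1 (le_refl 1)]
  have hshift : (fun j => g 1 (j+1)) = fun j => (1/2) * ((catalan j:ℝ)/4^j) := by
    funext j
    unfold g
    rw [c_one (j+1) (by omega)]
    simp only [Nat.add_sub_cancel]
    rw [pow_succ]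
    field_simp
    ring
  have h2 : HasSum (fun j => g 1 (j+1)) 1 := by
    rw [hshift]
    have h := hasSum_catalan.mul_left (1/2 : ℝ)
    norm_num at h ⊢
    exact h
  have h3 := (hasSum_nat_add_iff (f := g 1) 1).mp h2
  simpa [h0] using h3

lemma g_key (n m : ℕ) (hn : 1 ≤ n) :
    g (n+1) m = ∑ kl ∈ Finset.HasAntidiagonal.antidiagonal m, g 1 kl.1 * g n kl.2 := by
  rw [Finset.Nat.sum_antidiagonal_eq_sum_range_succ_mk]
  unfold g
  rw [c_rec m n]
  rw [show Finset.range (m+1) = insert 0 (Finset.Icc 1 m) by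
    ext x; simp only [Finset.mem_range, Finset.mem_insert, Finset.mem_Icc]; omega]
  rw [Finset.sum_insert (by simp)]
  rw [c_zero_n 1 (le_refl 1)]
  simp only [Nat.cast_zero, zero_mul, mul_zero, zero_div, zero_add, Nat.cast_sum,
    Nat.cast_mul]
  rw [Finset.sum_mul, Finset.sum_div]
  apply Finset.sum_congr rfl
  intro k hk
  rw [Finset.mem_Icc] at hk
  have hp : (4:ℝ)^k * 4^(m-k) = 4^m := by
    rw [← pow_add]
    congr 1
    omega
  have h4k : (0:ℝ) < 4^k := by positivity
  have h4mk : (0:ℝ) < 4^(m-k) := by positivity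
  field_simp
  rw [← hp]
  ring

lemma hasSum_g (n : ℕ) (hn : 1 ≤ n) : HasSum (g n) 1 := by
  induction n, hn using Nat.le_induction with
  | base => exact hasSum_g1
  | succ n hn ih =>
      have hf : Summable (fun m => ‖g 1 m‖) := by
        rw [summable_norm_iff]
        exact hasSum_g1.summable
      have hg : Summable (fun m => ‖g n m‖) := by
        rw [summable_norm_iff]
        exact ih.summable
      have hsum : Summable (fun m => ∑ kl ∈ Finset.HasAntidiagonal.antidiagonal m, g 1 kl.1 * g n kl.2) :=
        summable_sum_mul_antidiagonal_of_summable_norm' hf hasSum_g1.summable hg ih.summable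
      have ht : ∑' m, (∑ kl ∈ Finset.HasAntidiagonal.antidiagonal m, g 1 kl.1 * g n kl.2) = 1 := by
        rw [← tsum_mul_tsum_eq_tsum_sum_antidiagonal_of_summable_norm hf hg,
          hasSum_g1.tsum_eq, ih.tsum_eq]
        norm_num
      have hkey : g (n+1) = fun m => ∑ kl ∈ Finset.HasAntidiagonal.antidiagonal m, g 1 kl.1 * g n kl.2 :=
        funext (fun m => g_key n m hn)
      rw [hkey, hsum.hasSum_iff]
      exact ht

lemma c_small (n : ℕ) (hn : 1 ≤ n) : ∀ m, m < n → c m n = 0 := by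
  induction n, hn using Nat.le_induction with
  | base =>
      intro m hm
      have : m = 0 := by omega
      subst this
      exact c_zero_n 1 (le_refl 1)
  | succ n hn ih =>
      intro m hm
      rw [c_rec m n]
      apply Finset.sum_eq_zero
      intro k hk
      rw [Finset.mem_Icc] at hk
      have : c (m-k) n = 0 := ih (m-k) (by omega)
      rw [this, mul_zero]

end HumpAux

open HumpAux Filter in
/-- For every `n ≥ 1`, `∑_{m} card(Ĥ²_{m,n}) / 2^{2m−n} = 1`
(the terms with `m < n` vanish since `Ĥ²_{m,n}` is then empty). -/
theorem tsum_card_H2_div_pow (n : ℕ) (hn : 1 ≤ n) :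
    ∑' m : ℕ, ((H2 m n).card : ℝ) / 2 ^ (2 * m - n) = 1 := by
  have hfun : (fun m : ℕ => ((H2 m n).card : ℝ) / 2 ^ (2*m - n)) = g n := by
    funext m
    rw [show (H2 m n).card = c m n from card_H2_eq m n]
    unfold g
    rcases le_or_gt n (2*m) with h | h
    · have h2 : (2:ℝ)^(2*m) = 2^(2*m-n) * 2^n := by rw [← pow_add]; congr 1; omega
      have h4 : (4:ℝ)^m = 2^(2*m) := by
        rw [show (4:ℝ) = 2^2 by norm_num, ← pow_mul]
      rw [h4, h2]
      have hp : (0:ℝ) < 2^(2*m-n) := by positivity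
      have hq : (0:ℝ) < 2^n := by positivity
      field_simp
    · have hm : m < n := by omega
      rw [c_small n hn m hm]
      simp
  rw [hfun]
  exact (hasSum_g n hn).tsum_eq
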